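/- Let G be a finite abelian group and S a zero-sum free sequence over G, and let S₁, …, S_t be pairwise disjoint subsequences of S. Then |Σ(S)| ≥ |Σ(S₁)| + |Σ(S₂)| + ⋯ + |Σ(S_t)|. -/

import Mathlib

/-- Set of sums of nonempty subsequences of `S`. -/
def subSums {G : Type*} [AddCommMonoid G] (S : Multiset G) : Set G :=
  {x | ∃ T : Multiset G, T ≤ S ∧ T ≠ 0 ∧ T.sum = x}

/-- Set of sums of subsequences of `S` of length exactly `k`. -/
def sumsLen {G : Type*} [AddCommMonoid G] (k : ℕ) (S : Multiset G) : Set G :=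
  {x | ∃ T : Multiset G, T ≤ S ∧ Multiset.card T = k ∧ T.sum = x}

/-- Set of sums of subsequences of `S` of length at least `k`. -/
def sumsGe {G : Type*} [AddCommMonoid G] (k : ℕ) (S : Multiset G) : Set G :=
  {x | ∃ T : Multiset G, T ≤ S ∧ k ≤ Multiset.card T ∧ T.sum = x}

/-- Union of translated copies of `subSums` of each list member. -/
def setOfSums {G : Type*} [AddCommGroup G] : G → List (Multiset G) → Set G
  | _, [] => ∅
  | g, (A :: L') => ((g + ·) '' subSums A) ∪ setOfSums (g + A.sum) L'

lemma mem_setOfSums {G : Type*} [AddCommGroup G] {g : G} {L : List (Multiset G)} {x : G}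
    (hx : x ∈ setOfSums g L) :
    ∃ V U : Multiset G, V + U ≤ L.sum ∧ U ≠ 0 ∧ x = g + V.sum + U.sum := by
  induction L generalizing g with
  | nil => simp [setOfSums] at hx
  | cons A L' ih =>
    rcases hx with ⟨u, ⟨U, hU, hU0, rfl⟩, rfl⟩ | hx
    · refine ⟨0, U, ?_, hU0, by simp⟩
      simpa using le_trans hU (Multiset.le_add_right _ _)
    · obtain ⟨V, U, hVU, hU0, rfl⟩ := ih hx
      refine ⟨A + V, U, ?_, hU0, ?_⟩
      · simpa [add_assoc] using add_le_add (le_refl A) hVU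
      · simp [Multiset.sum_add]; abel

lemma ncard_setOfSums {G : Type*} [AddCommGroup G] [Fintype G] {S : Multiset G}
    (hS : (0 : G) ∉ subSums S) :
    ∀ (L : List (Multiset G)) (g : G), L.sum ≤ S →
      (L.map fun T => (subSums T).ncard).sum ≤ (setOfSums g L).ncard := by
  intro L
  induction L with
  | nil => simp
  | cons A L' ih =>
    intro g hLS
    simp only [List.sum_cons] at hLS
    have hL'S : L'.sum ≤ S := le_trans (Multiset.le_add_left _ _) hLS
    have hdisj : Disjoint ((g + ·) '' subSums A) (setOfSums (g + A.sum) L') := by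
      rw [Set.disjoint_left]
      rintro x ⟨u, ⟨U₀, hU₀A, hU₀0, rfl⟩, rfl⟩ hx2
      obtain ⟨V, U, hVU, hU0, hxeq⟩ := mem_setOfSums hx2
      obtain ⟨W, hW⟩ := Multiset.le_iff_exists_add.mp hU₀A
      have hWA : W ≤ A := hW ▸ Multiset.le_add_left W U₀
      apply hS
      refine ⟨W + V + U, ?_, ?_, ?_⟩
      · calc W + V + U = W + (V + U) := by rw [add_assoc]
          _ ≤ A + L'.sum := add_le_add hWA hVU
          _ ≤ S := hLS
      · intro h
        apply hU0
        have : U ≤ (0 : Multiset G) := h ▸ Multiset.le_add_left _ _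
        simpa using Multiset.le_zero.mp this
      · have h1 : U₀.sum = A.sum + V.sum + U.sum := by
          have h : g + U₀.sum = g + (A.sum + V.sum + U.sum) := by
            rw [show g + (A.sum + V.sum + U.sum) = g + A.sum + V.sum + U.sum by abel]
            exact hxeq
          exact add_left_cancel h
        have hA : A.sum = U₀.sum + W.sum := by rw [hW, Multiset.sum_add]
        have key : W.sum + V.sum + U.sum = 0 := by
          have h2 : A.sum = A.sum + (W.sum + V.sum + U.sum) := by
            conv_lhs => rw [hA, h1]
            abel
          exact (left_eq_add.mp h2)
        rw [Multiset.sum_add, Multiset.sum_add]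
        exact key
    have hcard : (setOfSums g (A :: L')).ncard
        = ((g + ·) '' subSums A).ncard + (setOfSums (g + A.sum) L').ncard := by
      exact Set.ncard_union_eq hdisj (Set.toFinite _) (Set.toFinite _)
    have himg : ((g + ·) '' subSums A).ncard = (subSums A).ncard :=
      Set.ncard_image_of_injective _ (add_right_injective g)
    simp only [List.map_cons, List.sum_cons]
    rw [hcard, himg]
    exact add_le_add le_rfl (ih (g + A.sum) hL'S)

theorem stmt2 {G : Type*} [AddCommGroup G] [Fintype G]
    (S : Multiset G) (hS : (0 : G) ∉ subSums S)
    (L : List (Multiset G)) (hL : L.sum ≤ S) :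
    (subSums S).ncard ≥ (L.map fun T => (subSums T).ncard).sum := by
  have h1 := ncard_setOfSums hS L 0 hL
  refine le_trans h1 (Set.ncard_le_ncard ?_ (Set.toFinite _))
  intro x hx
  obtain ⟨V, U, hVU, hU0, rfl⟩ := mem_setOfSums hx
  refine ⟨V + U, le_trans hVU hL, ?_, by simp [Multiset.sum_add]⟩
  intro h
  apply hU0
  have : U ≤ (0 : Multiset G) := h ▸ Multiset.le_add_left _ _
  simpa using Multiset.le_zero.mp this
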